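/- Let $s \in \mathbb{N}$ and $\nu \in \mathbb{N}_0^s$ be a multi-index. Then $\sum_{m \le \nu} \binom{\nu}{m}\, \frac{(|m|+1)!}{(\ln 2)^{|m|}} \le 2\, \frac{(|\nu|+1)!}{(\ln 2)^{|\nu|}}$, where the sum is over all multi-indices $m \in \mathbb{N}_0^s$ with $m_j \le \nu_j$ for all $j$. -/

import Mathlib

open Finset Polynomial

lemma mv_pi_Iic_eq {s : ℕ} (ν : Fin s → ℕ) :
    Finset.Iic ν = Fintype.piFinset fun j => Finset.Iic (ν j) := by
  ext m; simp [Fintype.mem_piFinset, Pi.le_def]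

lemma mv_nat_Iic_eq_range (n : ℕ) : Finset.Iic n = Finset.range (n + 1) := by
  ext i; simp [Nat.lt_succ_iff]

lemma multi_vandermonde {s : ℕ} (ν : Fin s → ℕ) (k : ℕ) :
    ∑ m ∈ (Finset.Iic ν).filter (fun m => ∑ j, m j = k),
        ∏ j, (ν j).choose (m j) = (∑ j, ν j).choose k := by
  have hexp : ∀ n : ℕ, ((X : ℕ[X]) + 1) ^ n
      = ∑ i ∈ Finset.Iic n, X ^ i * (n.choose i : ℕ[X]) := by
    intro n
    rw [add_pow, mv_nat_Iic_eq_range]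
    simp [one_pow]
  have hpoly : (∑ m ∈ Finset.Iic ν, (∏ j, ((ν j).choose (m j) : ℕ[X])) * X ^ (∑ j, m j))
      = ((X : ℕ[X]) + 1) ^ (∑ j, ν j) := by
    rw [← Finset.prod_pow_eq_pow_sum]
    simp_rw [hexp]
    rw [mv_pi_Iic_eq, Finset.prod_univ_sum]
    refine Finset.sum_congr rfl fun m _ => ?_
    rw [Finset.prod_mul_distrib, Finset.prod_pow_eq_pow_sum, mul_comm]
  have := congrArg (fun p => Polynomial.coeff p k) hpoly
  simp only [Polynomial.finset_sum_coeff] at this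
  rw [Polynomial.coeff_X_add_one_pow] at this
  have h2 : ∀ m ∈ Finset.Iic ν,
      Polynomial.coeff ((∏ j, ((ν j).choose (m j) : ℕ[X])) * X ^ (∑ j, m j)) k
        = (∏ j, (ν j).choose (m j)) * (if (∑ j, m j) = k then 1 else 0) := by
    intro m _
    simp_rw [← Polynomial.C_eq_natCast, ← map_prod, Polynomial.coeff_C_mul,
      Polynomial.coeff_X_pow]
    simp [eq_comm]
  rw [Finset.sum_congr rfl h2] at this
  rw [Finset.sum_filter]
  simpa [mul_ite] using this


/-- Multi-index estimate (equation (counting4) in the paper):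
`∑_{m ≤ ν} (ν choose m) * (|m|+1)! / (ln 2)^{|m|} ≤ 2 * (|ν|+1)! / (ln 2)^{|ν|}`,
where the sum is over all multi-indices `m : Fin s → ℕ` with `m ≤ ν`. -/
theorem sum_multichoose_factorial_succ_log2_le_two (s : ℕ) (ν : Fin s → ℕ) :
    ∑ m ∈ Finset.Iic ν,
        (∏ j, (Nat.choose (ν j) (m j) : ℝ)) *
          (Nat.factorial ((∑ j, m j) + 1) : ℝ) / Real.log 2 ^ (∑ j, m j)
      ≤ 2 * (Nat.factorial ((∑ j, ν j) + 1) : ℝ) / Real.log 2 ^ (∑ j, ν j) := by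
  set L := Real.log 2 with hLdef
  have hL : 0 < L := Real.log_pos (by norm_num)
  set n := ∑ j, ν j with hn
  have hmaps : ∀ m ∈ Finset.Iic ν, (∑ j, m j) ∈ Finset.range (n + 1) := by
    intro m hm
    rw [Finset.mem_range, Nat.lt_succ_iff, hn]
    exact Finset.sum_le_sum fun j _ => (Finset.mem_Iic.mp hm) j
  rw [← Finset.sum_fiberwise_of_maps_to hmaps]
  have hinner : ∀ k ∈ Finset.range (n + 1),
      (∑ m ∈ (Finset.Iic ν).filter (fun m => (∑ j, m j) = k),
        (∏ j, (Nat.choose (ν j) (m j) : ℝ)) *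
          (Nat.factorial ((∑ j, m j) + 1) : ℝ) / L ^ (∑ j, m j))
      = (n.choose k : ℝ) * (Nat.factorial (k + 1) : ℝ) / L ^ k := by
    intro k _
    have h1 : ∀ m ∈ (Finset.Iic ν).filter (fun m => (∑ j, m j) = k),
        (∏ j, (Nat.choose (ν j) (m j) : ℝ)) *
          (Nat.factorial ((∑ j, m j) + 1) : ℝ) / L ^ (∑ j, m j)
        = (∏ j, (Nat.choose (ν j) (m j) : ℝ)) *
          ((Nat.factorial (k + 1) : ℝ) / L ^ k) := by
      intro m hm
      rw [(Finset.mem_filter.mp hm).2, mul_div_assoc]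
    rw [Finset.sum_congr rfl h1, ← Finset.sum_mul, ← mul_div_assoc]
    congr 2
    have hv := multi_vandermonde ν k
    rw [hn]
    exact_mod_cast congrArg (fun t : ℕ => (t : ℝ)) hv
  rw [Finset.sum_congr rfl hinner]
  have hterm : ∀ k ∈ Finset.range (n + 1),
      (n.choose k : ℝ) * (Nat.factorial (k + 1) : ℝ) / L ^ k
        ≤ L ^ (n - k) / (Nat.factorial (n - k) : ℝ) *
            ((Nat.factorial (n + 1) : ℝ) / L ^ n) := by
    intro k hk
    have hkn : k ≤ n := Nat.lt_succ_iff.mp (Finset.mem_range.mp hk)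
    have hnat : n.choose k * Nat.factorial (k + 1) * Nat.factorial (n - k)
        ≤ Nat.factorial (n + 1) := by
      have h1 : n.choose k * k.factorial * (n - k).factorial = n.factorial :=
        Nat.choose_mul_factorial_mul_factorial hkn
      calc n.choose k * Nat.factorial (k + 1) * Nat.factorial (n - k)
          = (k + 1) * (n.choose k * k.factorial * (n - k).factorial) := by
            rw [Nat.factorial_succ]; ring
        _ = (k + 1) * n.factorial := by rw [h1]
        _ ≤ (n + 1) * n.factorial := by gcongr
        _ = Nat.factorial (n + 1) := (Nat.factorial_succ n).symm
    have key : (n.choose k : ℝ) * (Nat.factorial (k + 1) : ℝ)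
        ≤ (Nat.factorial (n + 1) : ℝ) / (Nat.factorial (n - k) : ℝ) := by
      rw [le_div_iff₀ (by positivity)]
      exact_mod_cast hnat
    have hsplit : L ^ n = L ^ (n - k) * L ^ k := by
      rw [← pow_add]; congr 1; omega
    calc (n.choose k : ℝ) * (Nat.factorial (k + 1) : ℝ) / L ^ k
        ≤ ((Nat.factorial (n + 1) : ℝ) / (Nat.factorial (n - k) : ℝ)) / L ^ k := by
          gcongr
      _ = L ^ (n - k) / (Nat.factorial (n - k) : ℝ) *
            ((Nat.factorial (n + 1) : ℝ) / L ^ n) := by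
          rw [hsplit]
          have h1 : (Nat.factorial (n - k) : ℝ) ≠ 0 := by positivity
          have h2 : L ≠ 0 := hL.ne'
          field_simp
  refine le_trans (Finset.sum_le_sum hterm) ?_
  rw [← Finset.sum_mul]
  have hreflect : (∑ k ∈ Finset.range (n + 1), L ^ (n - k) / (Nat.factorial (n - k) : ℝ))
      = ∑ j ∈ Finset.range (n + 1), L ^ j / (Nat.factorial j : ℝ) := by
    have := Finset.sum_range_reflect (fun j => L ^ j / (Nat.factorial j : ℝ)) (n + 1)
    simpa using this
  rw [hreflect]
  have hexp : (∑ j ∈ Finset.range (n + 1), L ^ j / (Nat.factorial j : ℝ)) ≤ 2 := by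
    have h := Real.sum_le_exp_of_nonneg hL.le (n + 1)
    rwa [hLdef, Real.exp_log (by norm_num : (0:ℝ) < 2)] at h
  have hpos : (0:ℝ) ≤ (Nat.factorial (n + 1) : ℝ) / L ^ n := by positivity
  calc (∑ j ∈ Finset.range (n + 1), L ^ j / (Nat.factorial j : ℝ)) *
        ((Nat.factorial (n + 1) : ℝ) / L ^ n)
      ≤ 2 * ((Nat.factorial (n + 1) : ℝ) / L ^ n) := by gcongr
    _ = 2 * (Nat.factorial (n + 1) : ℝ) / L ^ n := by rw [mul_div_assoc]
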